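/- For any dimension d ≥ 1, any positive integers n_1, …, n_d, and any arrangement A of an n_1 × n_2 × ⋯ × n_d matrix, there exists a monotonic arrangement A' of the same matrix with spread(A') ≤ spread(A). In particular, the minimum possible spread over all arrangements is attained by a monotonic arrangement. -/

import Mathlib

/-- Two cells of the `n 0 × ⋯ × n (d-1)` matrix lie in a common line:
they agree in all coordinates except (possibly) one. -/
def sameLine {d : ℕ} {n : Fin d → ℕ} (c c' : (i : Fin d) → Fin (n i)) : Prop :=
  ∃ t : Fin d, ∀ s : Fin d, s ≠ t → c s = c' s

instance {d : ℕ} {n : Fin d → ℕ} (c c' : (i : Fin d) → Fin (n i)) :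
    Decidable (sameLine c c') := by
  unfold sameLine; infer_instance

/-- The spread of an arrangement (= bijection from cells to `{0,…,∏ nᵢ − 1}`,
a zero-based version of `{1,…,∏ nᵢ}`): the maximum difference of values over
all pairs of cells lying in a common line. -/
def spread {d : ℕ} {n : Fin d → ℕ}
    (A : ((i : Fin d) → Fin (n i)) ≃ Fin (∏ i, n i)) : ℕ :=
  Finset.sup Finset.univ
    (fun p : ((i : Fin d) → Fin (n i)) × ((i : Fin d) → Fin (n i)) =>
      if sameLine p.1 p.2 then Nat.dist (A p.1) (A p.2) else 0)

/-- An arrangement is monotonic if its values strictly increase along every line. -/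
def monotonic {d : ℕ} {n : Fin d → ℕ}
    (A : ((i : Fin d) → Fin (n i)) ≃ Fin (∏ i, n i)) : Prop :=
  ∀ c c' : (i : Fin d) → Fin (n i), ∀ t : Fin d,
    (∀ s : Fin d, s ≠ t → c s = c' s) → c t < c' t → A c < A c'



section crux
variable {m : ℕ} {α : Type*} [LinearOrder α]
lemma crux (f g : Fin m → α) (k : Fin m)
    (H : ∀ j, g j ≤ g (Tuple.sort g k) → f j < f (Tuple.sort f k)) : False := by
  have hmaps : ∀ i ∈ Finset.Iic k,
      (Tuple.sort f)⁻¹ (Tuple.sort g i) ∈ Finset.Iio k := by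
    intro i hi
    have h1 : g (Tuple.sort g i) ≤ g (Tuple.sort g k) :=
      Tuple.monotone_sort g (Finset.mem_Iic.mp hi)
    have h2 : f (Tuple.sort g i) < f (Tuple.sort f k) := H _ h1
    have h3 : (f ∘ Tuple.sort f) ((Tuple.sort f)⁻¹ (Tuple.sort g i)) <
        (f ∘ Tuple.sort f) k := by simpa using h2
    by_contra hk
    have hk' : k ≤ (Tuple.sort f)⁻¹ (Tuple.sort g i) := by
      simpa [Finset.mem_Iio] using hk
    exact absurd (Tuple.monotone_sort f hk') (not_le.mpr h3)
  have hinj : Set.InjOn (fun i => (Tuple.sort f)⁻¹ (Tuple.sort g i)) (Finset.Iic k) := by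
    intro a _ b _ hab; simpa using hab
  have := Finset.card_le_card_of_injOn _ hmaps hinj
  rw [Fin.card_Iic, Fin.card_Iio] at this
  omega

lemma sort_lt (f g : Fin m → α) (h : ∀ j, f j < g j) (k : Fin m) :
    f (Tuple.sort f k) < g (Tuple.sort g k) := by
  by_contra hc
  push_neg at hc
  exact crux f g k fun j hj => lt_of_lt_of_le (h j) (le_trans hj hc)

lemma sort_le {N : ℕ} (f g : Fin m → Fin N) (M : ℕ)
    (h : ∀ j, (f j : ℕ) ≤ (g j : ℕ) + M) (k : Fin m) :
    (f (Tuple.sort f k) : ℕ) ≤ (g (Tuple.sort g k) : ℕ) + M := by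
  by_contra hc
  push_neg at hc
  refine crux f g k fun j hj => Fin.lt_def.mpr ?_
  exact lt_of_le_of_lt (le_trans (h j) (Nat.add_le_add_right hj M)) hc
end crux

section arr
variable {d : ℕ} {n : Fin d → ℕ}

abbrev Arr (n : Fin d → ℕ) := ((i : Fin d) → Fin (n i)) ≃ Fin (∏ i, n i)

def sortPerm (t : Fin d) (A : Arr n) (c : (i : Fin d) → Fin (n i)) :
    Equiv.Perm (Fin (n t)) :=
  Tuple.sort (fun j => A (Function.update c t j))

lemma update_congr {c c' : (i : Fin d) → Fin (n i)} {t : Fin d}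
    (h : ∀ s, s ≠ t → c s = c' s) (j : Fin (n t)) :
    Function.update c t j = Function.update c' t j := by
  funext s
  by_cases hs : s = t
  · subst hs; simp
  · rw [Function.update_of_ne hs, Function.update_of_ne hs, h s hs]

lemma sortPerm_congr (t : Fin d) (A : Arr n) {c c' : (i : Fin d) → Fin (n i)}
    (h : ∀ s, s ≠ t → c s = c' s) : sortPerm t A c = sortPerm t A c' := by
  unfold sortPerm
  congr 1
  funext j
  rw [update_congr h]

lemma update_off {c : (i : Fin d) → Fin (n i)} {t s : Fin d} (hs : s ≠ t)
    (j : Fin (n t)) : Function.update c t j s = c s := Function.update_of_ne hs _ _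

def sortEquiv (t : Fin d) (A : Arr n) :
    ((i : Fin d) → Fin (n i)) ≃ ((i : Fin d) → Fin (n i)) where
  toFun c := Function.update c t (sortPerm t A c (c t))
  invFun c := Function.update c t ((sortPerm t A c)⁻¹ (c t))
  left_inv c := by
    have h : ∀ s, s ≠ t → Function.update c t (sortPerm t A c (c t)) s = c s :=
      fun s hs => update_off hs _
    dsimp only
    rw [sortPerm_congr t A h]
    simp [Function.update_idem]
  right_inv c := by
    have h : ∀ s, s ≠ t → Function.update c t ((sortPerm t A c)⁻¹ (c t)) s = c s :=
      fun s hs => update_off hs _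
    dsimp only
    rw [sortPerm_congr t A h]
    simp [Function.update_idem]

def sortArr (t : Fin d) (A : Arr n) : Arr n := (sortEquiv t A).trans A

lemma sortArr_apply (t : Fin d) (A : Arr n) (c : (i : Fin d) → Fin (n i)) :
    sortArr t A c = A (Function.update c t (sortPerm t A c (c t))) := rfl

/-- Monotone along direction `t`. -/
def monoDir (t : Fin d) (A : Arr n) : Prop :=
  ∀ c c' : (i : Fin d) → Fin (n i),
    (∀ s, s ≠ t → c s = c' s) → c t < c' t → A c < A c'

lemma monoDir_sortArr_self (t : Fin d) (A : Arr n) : monoDir t (sortArr t A) := by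
  intro c c' h hlt
  rw [sortArr_apply, sortArr_apply, sortPerm_congr t A h, update_congr h]
  have hinj : Function.Injective (fun j => A (Function.update c' t j)) := by
    intro a b hab
    have := A.injective hab
    have := congrFun this t
    simpa using this
  have hsm : StrictMono ((fun j => A (Function.update c' t j)) ∘ sortPerm t A c') :=
    (Tuple.monotone_sort _).strictMono_of_injective
      (hinj.comp (sortPerm t A c').injective)
  simpa using hsm hlt

lemma monoDir_sortArr (s t : Fin d) (A : Arr n) (hA : monoDir s A) :
    monoDir s (sortArr t A) := by
  by_cases hst : s = t
  · subst hst; exact monoDir_sortArr_self s A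
  intro c c' h hlt
  have hct : c t = c' t := h t (Ne.symm hst)
  rw [sortArr_apply, sortArr_apply]
  have hkey : ∀ j : Fin (n t),
      A (Function.update c t j) < A (Function.update c' t j) := by
    intro j
    refine hA _ _ (fun u hu => ?_) ?_
    · by_cases hut : u = t
      · subst hut; simp
      · rw [update_off hut, update_off hut]; exact h u hu
    · rw [update_off hst, update_off hst]; exact hlt
  have := sort_lt (fun j => A (Function.update c t j))
      (fun j => A (Function.update c' t j)) hkey (c t)
  unfold sortPerm
  rw [← hct]
  exact this
end arr

lemma nat_dist_le_iff (x y M : ℕ) : Nat.dist x y ≤ M ↔ x ≤ y + M ∧ y ≤ x + M := by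
  simp [Nat.dist]; omega

section spr
variable {d : ℕ} {n : Fin d → ℕ}

lemma le_spread (A : Arr n) (c c' : (i : Fin d) → Fin (n i)) (h : sameLine c c') :
    Nat.dist (A c) (A c') ≤ spread A := by
  have := Finset.le_sup (f := fun p : ((i : Fin d) → Fin (n i)) × ((i : Fin d) → Fin (n i)) =>
    if sameLine p.1 p.2 then Nat.dist (A p.1) (A p.2) else 0) (Finset.mem_univ (c, c'))
  have h2 : (if sameLine c c' then Nat.dist (A c) (A c') else 0) ≤ spread A := this
  rwa [if_pos h] at h2

lemma spread_sortArr_le (t : Fin d) (A : Arr n) : spread (sortArr t A) ≤ spread A := by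
  apply Finset.sup_le
  rintro ⟨c, c'⟩ -
  split_ifs with hp
  swap
  · exact Nat.zero_le _
  obtain ⟨t', ht'⟩ := hp
  by_cases hofft : ∀ s, s ≠ t → c s = c' s
  · rw [sortArr_apply, sortArr_apply, sortPerm_congr t A hofft, update_congr hofft]
    refine le_spread A _ _ ⟨t, fun s hs => ?_⟩
    rw [update_off hs, update_off hs]
  · push_neg at hofft
    obtain ⟨s, hst, hs⟩ := hofft
    have hseq : s = t' := by
      by_contra hne
      exact hs (ht' s hne)
    subst hseq
    have htt' : s ≠ t := hst
    have hct : c t = c' t := ht' t (fun h => htt' h.symm)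
    set f : Fin (n t) → Fin (∏ i, n i) := fun j => A (Function.update c t j) with hf
    set g : Fin (n t) → Fin (∏ i, n i) := fun j => A (Function.update c' t j) with hg
    have hpair : ∀ j, Nat.dist (f j) (g j) ≤ spread A := by
      intro j
      refine le_spread A _ _ ⟨s, fun u hu => ?_⟩
      by_cases hut : u = t
      · subst hut; simp
      · rw [update_off hut, update_off hut]
        exact ht' u hu
    have h1 : ∀ j, (f j : ℕ) ≤ (g j : ℕ) + spread A :=
      fun j => ((nat_dist_le_iff _ _ _).mp (hpair j)).1
    have h2 : ∀ j, (g j : ℕ) ≤ (f j : ℕ) + spread A :=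
      fun j => ((nat_dist_le_iff _ _ _).mp (hpair j)).2
    have e1 : sortArr t A c = f (Tuple.sort f (c t)) := rfl
    have e2 : sortArr t A c' = g (Tuple.sort g (c t)) := by
      rw [hct]; rfl
    rw [e1, e2, nat_dist_le_iff]
    exact ⟨sort_le f g (spread A) h1 (c t), sort_le g f (spread A) h2 (c t)⟩

def sortAll : List (Fin d) → Arr n → Arr n
  | [], A => A
  | t :: l, A => sortAll l (sortArr t A)

lemma spread_sortAll_le : ∀ (l : List (Fin d)) (A : Arr n),
    spread (sortAll l A) ≤ spread A
  | [], _ => le_refl _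
  | t :: l, A => le_trans (spread_sortAll_le l (sortArr t A)) (spread_sortArr_le t A)

lemma monoDir_sortAll (s : Fin d) : ∀ (l : List (Fin d)) (A : Arr n),
    monoDir s A → monoDir s (sortAll l A)
  | [], _, h => h
  | t :: l, A, h => monoDir_sortAll s l (sortArr t A) (monoDir_sortArr s t A h)

lemma monoDir_of_mem : ∀ (l : List (Fin d)) (A : Arr n) (t : Fin d), t ∈ l →
    monoDir t (sortAll l A)
  | [], _, _, h => absurd h List.not_mem_nil
  | t' :: l, A, t, h => by
    rcases List.mem_cons.mp h with h | h
    · subst h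
      exact monoDir_sortAll t l _ (monoDir_sortArr_self t A)
    · exact monoDir_of_mem l _ t h

end spr

theorem monotonic_spread_le (d : ℕ) (hd : 1 ≤ d) (n : Fin d → ℕ) (hn : ∀ i, 0 < n i) :
    (∀ A : ((i : Fin d) → Fin (n i)) ≃ Fin (∏ i, n i),
      ∃ A' : ((i : Fin d) → Fin (n i)) ≃ Fin (∏ i, n i),
        monotonic A' ∧ spread A' ≤ spread A) ∧
    (∃ A₀ : ((i : Fin d) → Fin (n i)) ≃ Fin (∏ i, n i),
      monotonic A₀ ∧
        ∀ B : ((i : Fin d) → Fin (n i)) ≃ Fin (∏ i, n i), spread A₀ ≤ spread B) := by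
  have part1 : ∀ A : Arr n, ∃ A' : Arr n, monotonic A' ∧ spread A' ≤ spread A := by
    intro A
    refine ⟨sortAll (List.finRange d) A, ?_, spread_sortAll_le _ A⟩
    intro c c' t h hlt
    exact monoDir_of_mem (List.finRange d) A t (List.mem_finRange t) c c' h hlt
  refine ⟨part1, ?_⟩
  have hcard : Fintype.card ((i : Fin d) → Fin (n i)) = Fintype.card (Fin (∏ i, n i)) := by
    simp
  have hne : Nonempty (Arr n) := ⟨Fintype.equivOfCardEq hcard⟩
  obtain ⟨B, -, hB⟩ := Finset.exists_min_image (Finset.univ : Finset (Arr n)) spread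
    ⟨hne.some, Finset.mem_univ _⟩
  obtain ⟨A₀, hmono, hle⟩ := part1 B
  exact ⟨A₀, hmono, fun B' => le_trans hle (hB B' (Finset.mem_univ _))⟩
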